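/- Let n ≥ 1 and let M be the n × n real symmetric tridiagonal matrix with diagonal entries a₁, …, a_n satisfying a_i ≤ −2 for all i, entries M_{i,i+1} = M_{i+1,i} = 1, and all other entries 0. Then M is negative definite. -/

import Mathlib

noncomputable def chainMat {n : ℕ} (a : Fin n → ℝ) : Matrix (Fin n) (Fin n) ℝ :=
  Matrix.of fun i j =>
    if i = j then a i
    else if (i : ℕ) + 1 = (j : ℕ) ∨ (j : ℕ) + 1 = (i : ℕ) then 1 else 0

lemma chainQuad (n : ℕ) (a x : Fin n → ℝ) :
    dotProduct x ((chainMat a).mulVec x) = ∑ i, x i * ∑ j, chainMat a i j * x j := by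
  rfl

lemma entry_cast {m : ℕ} (a : Fin (m+2) → ℝ) (i j : Fin (m+1)) :
    chainMat a i.castSucc j.castSucc = chainMat (a ∘ Fin.castSucc) i j := by
  simp [chainMat, Fin.castSucc_inj, Fin.ext_iff]

lemma entry_last_col {m : ℕ} (a : Fin (m+2) → ℝ) (i : Fin (m+1)) :
    chainMat a i.castSucc (Fin.last (m+1)) = if i = Fin.last m then 1 else 0 := by
  have hi := i.isLt
  simp only [chainMat, Matrix.of_apply, Fin.ext_iff, Fin.coe_castSucc, Fin.val_last]
  split_ifs <;> first | rfl | omega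

lemma entry_last_row {m : ℕ} (a : Fin (m+2) → ℝ) (j : Fin (m+1)) :
    chainMat a (Fin.last (m+1)) j.castSucc = if j = Fin.last m then 1 else 0 := by
  have hj := j.isLt
  simp only [chainMat, Matrix.of_apply, Fin.ext_iff, Fin.coe_castSucc, Fin.val_last]
  split_ifs <;> first | rfl | omega

lemma chain_key (m : ℕ) (a x : Fin (m+2) → ℝ) :
    dotProduct x ((chainMat a).mulVec x) =
      dotProduct (x ∘ Fin.castSucc)
        ((chainMat (a ∘ Fin.castSucc)).mulVec (x ∘ Fin.castSucc))
      + 2 * x (Fin.castSucc (Fin.last m)) * x (Fin.last (m+1))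
      + a (Fin.last (m+1)) * x (Fin.last (m+1)) ^ 2 := by
  rw [chainQuad, chainQuad]
  have h1 : ∀ i₀ : Fin (m+1), (∑ j, chainMat a i₀.castSucc j * x j) =
      (∑ j₀, chainMat (a ∘ Fin.castSucc) i₀ j₀ * x j₀.castSucc)
      + (if i₀ = Fin.last m then x (Fin.last (m+1)) else 0) := by
    intro i₀
    rw [Fin.sum_univ_castSucc (f := fun j => chainMat a i₀.castSucc j * x j)]
    congr 1
    · exact Finset.sum_congr rfl fun j _ => by rw [entry_cast]
    · rw [entry_last_col]; split <;> simp
  have h2 : (∑ j, chainMat a (Fin.last (m+1)) j * x j) =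
      x (Fin.castSucc (Fin.last m)) + a (Fin.last (m+1)) * x (Fin.last (m+1)) := by
    rw [Fin.sum_univ_castSucc (f := fun j => chainMat a (Fin.last (m+1)) j * x j)]
    congr 1
    · rw [Finset.sum_congr rfl fun j _ => by rw [entry_last_row]]
      simp
    · simp [chainMat]
  rw [Fin.sum_univ_castSucc (f := fun i => x i * ∑ j, chainMat a i j * x j)]
  rw [Finset.sum_congr rfl fun i _ => by rw [h1 i], h2]
  simp only [mul_add, Finset.sum_add_distrib, mul_ite, mul_zero]
  rw [Finset.sum_ite_eq' Finset.univ (Fin.last m)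
      (fun i₀ => x i₀.castSucc * x (Fin.last (m+1)))]
  simp only [Finset.mem_univ, if_true, Function.comp]
  ring

lemma chain_main (m : ℕ) :
    ∀ (a : Fin (m+1) → ℝ), (∀ i, a i ≤ -2) → ∀ x : Fin (m+1) → ℝ,
      dotProduct x ((chainMat a).mulVec x) ≤ -(x (Fin.last m))^2 ∧
      (x ≠ 0 → dotProduct x ((chainMat a).mulVec x) < -(x (Fin.last m))^2) := by
  induction m with
  | zero =>
    intro a ha x
    have h0 : dotProduct x ((chainMat a).mulVec x) = a 0 * x 0 ^ 2 := by
      rw [chainQuad]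
      simp [Fin.sum_univ_one, chainMat]
      ring
    have hlast : Fin.last 0 = 0 := rfl
    constructor
    · rw [h0, hlast]
      nlinarith [ha 0, sq_nonneg (x 0)]
    · intro hx
      have hx0 : x 0 ≠ 0 := by
        intro h
        apply hx; funext i
        have : i = 0 := Fin.eq_zero i
        rw [this, h]; rfl
      rw [h0, hlast]
      nlinarith [ha 0, sq_nonneg (x 0), sq_pos_of_ne_zero hx0]
  | succ m ih =>
    intro a ha x
    set x' : Fin (m+1) → ℝ := x ∘ Fin.castSucc with hx'def
    have key := chain_key m a x
    have ih' := ih (a ∘ Fin.castSucc) (fun i => ha _) x'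
    set p := x (Fin.castSucc (Fin.last m)) with hp
    set q := x (Fin.last (m+1)) with hq
    have hx'last : x' (Fin.last m) = p := rfl
    have haL := ha (Fin.last (m+1))
    have hle : dotProduct x ((chainMat a).mulVec x) ≤ -p^2 + 2*p*q + a (Fin.last (m+1)) * q^2 := by
      rw [key]
      have := ih'.1
      rw [hx'last] at this
      linarith
    constructor
    · calc dotProduct x ((chainMat a).mulVec x)
          ≤ -p^2 + 2*p*q + a (Fin.last (m+1)) * q^2 := hle
        _ ≤ -q^2 := by nlinarith [sq_nonneg (p - q), sq_nonneg q]
    · intro hx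
      by_cases hx' : x' = 0
      · -- then p = 0 and the smaller quadratic form is 0, and q ≠ 0
        have hp0 : p = 0 := by rw [← hx'last, hx']; rfl
        have hq0 : q ≠ 0 := by
          intro h
          apply hx; funext i
          refine Fin.lastCases ?_ ?_ i
          · exact h
          · intro j
            have : x' j = 0 := by rw [hx']; rfl
            exact this
        have hQ0 : dotProduct x' ((chainMat (a ∘ Fin.castSucc)).mulVec x') = 0 := by
          rw [hx']; simp
        rw [key, hQ0, hp0]
        have : (0:ℝ) < q^2 := sq_pos_of_ne_zero hq0
        nlinarith
      · have hlt := ih'.2 hx'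
        rw [hx'last] at hlt
        rw [key]
        nlinarith [sq_nonneg (p - q), sq_nonneg q]

/-- The intersection matrix of an admissible chain (tridiagonal, diagonal entries
`aᵢ ≤ -2`, off-diagonal entries `1`) is negative definite. -/
theorem stmt_8 (n : ℕ) (hn : 1 ≤ n) (a : Fin n → ℝ) (ha : ∀ i, a i ≤ -2)
    (M : Matrix (Fin n) (Fin n) ℝ)
    (hM : M = Matrix.of fun i j =>
      if i = j then a i
      else if (i : ℕ) + 1 = (j : ℕ) ∨ (j : ℕ) + 1 = (i : ℕ) then 1 else 0) :
    ∀ x : Fin n → ℝ, x ≠ 0 → dotProduct x (M.mulVec x) < 0 := by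
  intro x hx
  obtain ⟨m, rfl⟩ : ∃ m, n = m + 1 := ⟨n - 1, (Nat.succ_pred_eq_of_pos hn).symm⟩
  have hM' : M = chainMat a := hM
  rw [hM']
  have h := (chain_main m a ha x).2 hx
  nlinarith [sq_nonneg (x (Fin.last m))]
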